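/- Let z ∈ (0, 1], let ν ∈ ℝ satisfy z² ≤ ν ≤ 1, and set the boundary quadrature weight h₀ := (1 − z + ν/z)/2. Let Φ : ℤ → ℝ be square-summable over j ≤ 0 and satisfy the second-order extrapolation condition (ΔΦ)₀ = 0, i.e. Φ₁ = 2Φ₀ − Φ_{−1}. Define Ψ_j := (A(z)Φ)_j for j ≤ 0. Then ∑_{j ≤ −1} Ψ_j² + h₀·Ψ₀² ≤ ∑_{j ≤ −1} Φ_j² + h₀·Φ₀² − z·(Φ₀ − (z/2)(Φ₀ − Φ_{−1}))² − (z³/4)·(Φ₀ − Φ_{−1})². In particular the weighted norm with weight h₀ at j = 0 is non-increasing. -/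

import Mathlib

set_option maxHeartbeats 1000000


/-- Backward difference `(DΦ)_j = Φ_j - Φ_{j-1}`. -/
noncomputable def Dd (Φ : ℤ → ℝ) (j : ℤ) : ℝ := Φ j - Φ (j - 1)

/-- Centered difference `(D₀Φ)_j = (Φ_{j+1} - Φ_{j-1})/2`. -/
noncomputable def D0 (Φ : ℤ → ℝ) (j : ℤ) : ℝ := (Φ (j + 1) - Φ (j - 1)) / 2

/-- Discrete Laplacian `(ΔΦ)_j = Φ_{j-1} - 2Φ_j + Φ_{j+1}`. -/
noncomputable def Lap (Φ : ℤ → ℝ) (j : ℤ) : ℝ := Φ (j - 1) - 2 * Φ j + Φ (j + 1)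

/-- The three point scheme `A(z)Φ = Φ - z D₀Φ + (ν/2) ΔΦ`. -/
noncomputable def A3 (z ν : ℝ) (Φ : ℤ → ℝ) (j : ℤ) : ℝ :=
  Φ j - z * D0 Φ j + ν / 2 * Lap Φ j


noncomputable def Pf (Φ : ℤ → ℝ) (n : ℕ) : ℝ := Φ (-(n:ℤ))
noncomputable def Df (Φ : ℤ → ℝ) (n : ℕ) : ℝ := Pf Φ n - Pf Φ (n+1)
noncomputable def Tf (z ν : ℝ) (Φ : ℤ → ℝ) (n : ℕ) : ℝ :=
  (ν+z)/2 * Pf Φ (n+1)^2 - (ν-z)/2 * Pf Φ n^2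
noncomputable def Qf (z ν : ℝ) (Φ : ℤ → ℝ) (n : ℕ) : ℝ :=
  (ν-z)/2*(1+z)*(Df Φ n)^2 + (ν+z)/2*(1-z)*(Df Φ (n+1))^2
    - ((ν-z)/2)*((ν+z)/2)*(Df Φ n - Df Φ (n+1))^2

lemma psi_eq (z ν : ℝ) (Φ : ℤ → ℝ) (n : ℕ) :
    A3 z ν Φ (-1 - (n:ℤ)) = Pf Φ (n+1) + (ν-z)/2 * Df Φ n - (ν+z)/2 * Df Φ (n+1) := by
  have e1 : -1 - (n:ℤ) + 1 = -(n:ℤ) := by ring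
  have e2 : -1 - (n:ℤ) - 1 = -((n:ℤ)+2) := by ring
  have e3 : -1 - (n:ℤ) = -((n:ℤ)+1) := by ring
  have c1 : ((n+1 : ℕ) : ℤ) = (n:ℤ)+1 := by push_cast; ring
  have c2 : ((n+1+1 : ℕ) : ℤ) = (n:ℤ)+2 := by push_cast; ring
  simp only [A3, D0, Lap, Pf, Df, e1, e2, e3, c1, c2]
  ring

lemma sq_identity (z ν : ℝ) (Φ : ℤ → ℝ) (n : ℕ) :
    (A3 z ν Φ (-1 - (n:ℤ)))^2
      = Pf Φ (n+1)^2 - (Tf z ν Φ n - Tf z ν Φ (n+1)) - Qf z ν Φ n := by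
  rw [psi_eq]
  simp only [Tf, Qf, Df]
  ring

def iot : ℕ → {j : ℤ // j ≤ 0} := fun n => ⟨-(n:ℤ), neg_nonpos.mpr n.cast_nonneg⟩

lemma iot_inj : Function.Injective iot := by
  intro a b h
  have : -(a:ℤ) = -(b:ℤ) := congrArg Subtype.val h
  omega

/-- equivalence ℕ ≃ {j : ℤ // j ≤ -1} -/
noncomputable def eNeg : ℕ ≃ {j : ℤ // j ≤ -1} where
  toFun n := ⟨-1 - (n:ℤ), by omega⟩
  invFun j := (-1 - j.1).toNat
  left_inv n := by simp
  right_inv j := by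
    have := j.2
    ext
    simp
    omega

/-- Semi-boundedness of the three point scheme with second order extrapolation
`(ΔΦ)₀ = 0` at the outflow boundary, for the weighted norm with weight
`h₀ = (1 - z + ν/z)/2` at `j = 0`. -/
theorem three_point_second_order_extrapolation (z ν : ℝ)
    (hz0 : 0 < z) (hz1 : z ≤ 1) (h1 : z ^ 2 ≤ ν) (h2 : ν ≤ 1)
    (Φ : ℤ → ℝ) (hΦ : Summable (fun j : {j : ℤ // j ≤ 0} => (Φ j.1) ^ 2))
    (hext : Φ 1 = 2 * Φ 0 - Φ (-1)) :
    (∑' j : {j : ℤ // j ≤ -1}, (A3 z ν Φ j.1) ^ 2)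
        + (1 - z + ν / z) / 2 * (A3 z ν Φ 0) ^ 2
      ≤ (∑' j : {j : ℤ // j ≤ -1}, (Φ j.1) ^ 2) + (1 - z + ν / z) / 2 * (Φ 0) ^ 2
        - z * (Φ 0 - z / 2 * (Φ 0 - Φ (-1))) ^ 2
        - z ^ 3 / 4 * (Φ 0 - Φ (-1)) ^ 2 := by
  have hzne : z ≠ 0 := ne_of_gt hz0
  -- summability of P n ^ 2
  have hP : Summable (fun n : ℕ => Pf Φ n ^ 2) :=
    (hΦ.comp_injective iot_inj).congr (fun n => rfl)
  have hP1 : Summable (fun n : ℕ => Pf Φ (n+1) ^ 2) := (summable_nat_add_iff 1).2 hP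
  have hP2 : Summable (fun n : ℕ => Pf Φ (n+2) ^ 2) := (summable_nat_add_iff 2).2 hP
  have hD : Summable (fun n : ℕ => Df Φ n ^ 2) := by
    apply Summable.of_nonneg_of_le (fun n => sq_nonneg _)
      (fun n => ?_) (((hP.mul_left 2).add (hP1.mul_left 2)))
    simp only [Df]
    nlinarith [sq_nonneg (Pf Φ n + Pf Φ (n+1))]
  have hD1 : Summable (fun n : ℕ => Df Φ (n+1) ^ 2) := (summable_nat_add_iff 1).2 hD
  have hL : Summable (fun n : ℕ => (Df Φ n - Df Φ (n+1)) ^ 2) := by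
    apply Summable.of_nonneg_of_le (fun n => sq_nonneg _)
      (fun n => ?_) (((hD.mul_left 2).add (hD1.mul_left 2)))
    nlinarith [sq_nonneg (Df Φ n + Df Φ (n+1))]
  have hT : Summable (fun n : ℕ => Tf z ν Φ n) := by
    have := (hP1.mul_left ((ν+z)/2)).sub (hP.mul_left ((ν-z)/2))
    simpa [Tf] using this
  have hT1 : Summable (fun n : ℕ => Tf z ν Φ (n+1)) := (summable_nat_add_iff 1).2 hT
  have hTsub : Summable (fun n : ℕ => Tf z ν Φ n - Tf z ν Φ (n+1)) := hT.sub hT1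
  have hQ : Summable (fun n : ℕ => Qf z ν Φ n) := by
    have := ((hD.mul_left ((ν-z)/2*(1+z))).add (hD1.mul_left ((ν+z)/2*(1-z)))).sub
      (hL.mul_left (((ν-z)/2)*((ν+z)/2)))
    simpa [Qf] using this
  have hA : Summable (fun n : ℕ => (A3 z ν Φ (-1 - (n:ℤ)))^2) := by
    have := (hP1.sub hTsub).sub hQ
    apply this.congr
    intro n
    exact (sq_identity z ν Φ n).symm
  -- telescoping sum of T
  have hTtel : ∑' n : ℕ, (Tf z ν Φ n - Tf z ν Φ (n+1)) = Tf z ν Φ 0 := by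
    rw [Summable.tsum_sub hT hT1]
    have := Summable.tsum_eq_zero_add hT
    linarith [this]
  -- tsum of A3 squares
  have hSA : ∑' n : ℕ, (A3 z ν Φ (-1 - (n:ℤ)))^2
      = (∑' n : ℕ, Pf Φ (n+1)^2) - Tf z ν Φ 0 - ∑' n : ℕ, Qf z ν Φ n := by
    have e : ∑' n : ℕ, (A3 z ν Φ (-1 - (n:ℤ)))^2
        = ∑' n : ℕ, (Pf Φ (n+1)^2 - (Tf z ν Φ n - Tf z ν Φ (n+1)) - Qf z ν Φ n) :=
      tsum_congr (fun n => sq_identity z ν Φ n)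
    rw [e, Summable.tsum_sub (hP1.sub hTsub) hQ, Summable.tsum_sub hP1 hTsub, hTtel]
  -- evaluation of the sum of Q
  have hDsplit : ∑' n : ℕ, Df Φ n ^ 2 = Df Φ 0 ^ 2 + ∑' n : ℕ, Df Φ (n+1) ^ 2 :=
    Summable.tsum_eq_zero_add hD
  have hSQ : ∑' n : ℕ, Qf z ν Φ n
      = (ν-z)/2*(1+z) * (Df Φ 0 ^ 2 + ∑' n : ℕ, Df Φ (n+1)^2)
        + (ν+z)/2*(1-z) * (∑' n : ℕ, Df Φ (n+1)^2)
        - ((ν-z)/2)*((ν+z)/2) * (∑' n : ℕ, (Df Φ n - Df Φ (n+1))^2) := by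
    have e : ∑' n : ℕ, Qf z ν Φ n
        = ∑' n : ℕ, (((ν-z)/2*(1+z))*(Df Φ n ^2) + ((ν+z)/2*(1-z))*(Df Φ (n+1)^2)
            - (((ν-z)/2)*((ν+z)/2))*((Df Φ n - Df Φ (n+1))^2)) := tsum_congr (fun n => rfl)
    rw [e, Summable.tsum_sub ((hD.mul_left _).add (hD1.mul_left _)) (hL.mul_left _),
      Summable.tsum_add (hD.mul_left _) (hD1.mul_left _), tsum_mul_left, tsum_mul_left, tsum_mul_left,
      hDsplit]
  -- bound on the cross term
  have hSD1nn : (0:ℝ) ≤ ∑' n : ℕ, Df Φ (n+1)^2 := tsum_nonneg (fun n => sq_nonneg _)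
  have hSLnn : (0:ℝ) ≤ ∑' n : ℕ, (Df Φ n - Df Φ (n+1))^2 := tsum_nonneg (fun n => sq_nonneg _)
  have hSLle : ∑' n : ℕ, (Df Φ n - Df Φ (n+1))^2
      ≤ 2*(Df Φ 0 ^2 + ∑' n : ℕ, Df Φ (n+1)^2) + 2*(∑' n : ℕ, Df Φ (n+1)^2) := by
    have := Summable.tsum_le_tsum (f := fun n => (Df Φ n - Df Φ (n+1))^2)
      (g := fun n => 2*(Df Φ n ^2) + 2*(Df Φ (n+1)^2))
      (fun n => by nlinarith [sq_nonneg (Df Φ n + Df Φ (n+1))]) hL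
      ((hD.mul_left 2).add (hD1.mul_left 2))
    rw [Summable.tsum_add (hD.mul_left 2) (hD1.mul_left 2), tsum_mul_left, tsum_mul_left, hDsplit] at this
    linarith
  have hcross : ((ν-z)/2)*((ν+z)/2) * (∑' n : ℕ, (Df Φ n - Df Φ (n+1))^2)
      ≤ (ν - z^2) * (Df Φ 0 ^2 + ∑' n : ℕ, Df Φ (n+1)^2) := by
    set c3 : ℝ := ((ν-z)/2)*((ν+z)/2) with hc3
    set SL : ℝ := ∑' n : ℕ, (Df Φ n - Df Φ (n+1))^2
    set SD : ℝ := ∑' n : ℕ, Df Φ (n+1)^2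
    have hnz2 : (0:ℝ) ≤ ν - z^2 := by linarith
    rcases le_or_gt c3 0 with hc | hc
    · have : c3 * SL ≤ 0 := mul_nonpos_of_nonpos_of_nonneg hc hSLnn
      have : (0:ℝ) ≤ (ν - z^2) * (Df Φ 0 ^2 + SD) :=
        mul_nonneg hnz2 (by positivity)
      linarith [mul_nonpos_of_nonpos_of_nonneg hc hSLnn]
    · have h4c3 : 4*c3 ≤ ν - z^2 := by
        have : ν^2 ≤ ν := by nlinarith
        rw [hc3]; nlinarith
      have hb : c3 * SL ≤ c3 * (2*(Df Φ 0 ^2 + SD) + 2*SD) :=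
        mul_le_mul_of_nonneg_left hSLle (le_of_lt hc)
      nlinarith [sq_nonneg (Df Φ 0), mul_nonneg (le_of_lt hc) hSD1nn,
        mul_nonneg hnz2 hSD1nn, mul_nonneg hnz2 (sq_nonneg (Df Φ 0))]
  -- boundary values
  have hA0 : A3 z ν Φ 0 = Φ 0 - z * (Φ 0 - Φ (-1)) := by
    have e1 : (0:ℤ) + 1 = 1 := rfl
    have e2 : (0:ℤ) - 1 = -1 := rfl
    simp only [A3, D0, Lap, e1, e2, hext]
    ring
  have hDf0 : Df Φ 0 = Φ 0 - Φ (-1) := by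
    simp only [Df, Pf]
    norm_num
  have hT0 : Tf z ν Φ 0 = (ν+z)/2 * (Φ (-1))^2 - (ν-z)/2 * (Φ 0)^2 := by
    simp only [Tf, Pf]
    norm_num
  -- boundary algebraic identity
  have hbdy : (1 - z + ν / z) / 2 * ((Φ 0)^2 - (Φ 0 - z * (Φ 0 - Φ (-1)))^2)
      + ((ν+z)/2 * (Φ (-1))^2 - (ν-z)/2 * (Φ 0)^2)
      + (ν-z)/2*(1+z) * (Φ 0 - Φ (-1))^2
      - z * (Φ 0 - z / 2 * (Φ 0 - Φ (-1))) ^ 2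
      - z ^ 3 / 4 * (Φ 0 - Φ (-1)) ^ 2
      = (ν - z^2) * (Φ 0 - Φ (-1))^2 := by
    field_simp
    ring
  -- reindex the tsums
  have hre1 : (∑' j : {j : ℤ // j ≤ -1}, (A3 z ν Φ j.1) ^ 2)
      = ∑' n : ℕ, (A3 z ν Φ (-1 - (n:ℤ)))^2 :=
    (eNeg.tsum_eq (fun j => (A3 z ν Φ j.1)^2)).symm
  have hre2 : (∑' j : {j : ℤ // j ≤ -1}, (Φ j.1) ^ 2) = ∑' n : ℕ, Pf Φ (n+1)^2 := by
    rw [← eNeg.tsum_eq (fun j => (Φ j.1)^2)]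
    apply tsum_congr
    intro n
    show Φ (-1 - (n:ℤ))^2 = Φ (-((n+1:ℕ):ℤ))^2
    congr 2
    push_cast
    ring
  rw [hre1, hre2, hSA, hA0]
  have hfin := hcross
  rw [hDf0] at hSQ hfin
  linarith [hSQ, hfin, hbdy]
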